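/- Hankel transform of the moments with exponential generating function sec²: define m(n) = iteratedDeriv n (fun x => (cos x)⁻¹ ^ 2) 0, i.e., the n-th coefficient of the exponential power series expansion of sec²(x) at 0. Then for every natural number n, the determinant of the (n+1)×(n+1) Hankel matrix with (i,j) entry m(i+j) equals ∏_{k=0}^{n} ((k+1)(k+2))^{n-k}. -/

import Mathlib

open Real Set Matrix

noncomputable def gsec (k : ℕ) (x : ℝ) : ℝ := (Real.cos x)⁻¹ ^ (k + 2) * Real.sin x ^ k

def aa : ℕ → ℕ → ℝ
  | 0, 0 => 1
  | 0, _ + 1 => 0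
  | n + 1, k => k * aa n (k - 1) + (k + 2) * aa n (k + 1)

lemma aa_succ (n k : ℕ) : aa (n+1) k = k * aa n (k-1) + (k+2) * aa n (k+1) := rfl

lemma gsec_hasDerivAt (k : ℕ) {x : ℝ} (hx : Real.cos x ≠ 0) :
    HasDerivAt (gsec k) ((k : ℝ) * gsec (k-1) x + ((k : ℝ) + 2) * gsec (k+1) x) x := by
  have hc : HasDerivAt (fun x => (Real.cos x)⁻¹) (Real.sin x * ((Real.cos x)⁻¹)^2) x := by
    have := (Real.hasDerivAt_cos x).fun_inv hx
    refine this.congr_deriv ?_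
    field_simp
  have hcp : HasDerivAt (fun x => (Real.cos x)⁻¹ ^ (k+2))
      (((k : ℝ)+2) * ((Real.cos x)⁻¹)^(k+1) * (Real.sin x * ((Real.cos x)⁻¹)^2)) x := by
    have := hc.fun_pow (k+2)
    refine this.congr_deriv ?_
    push_cast; ring
  have hsp : HasDerivAt (fun x => Real.sin x ^ k)
      ((k : ℝ) * (Real.sin x)^(k-1) * Real.cos x) x := by
    simpa using (Real.hasDerivAt_sin x).fun_pow k
  have h := hcp.mul hsp
  refine h.congr_deriv ?_
  symm
  have hcc : (Real.cos x)⁻¹ * Real.cos x = 1 := inv_mul_cancel₀ hx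
  unfold gsec
  rcases k with _ | m
  · push_cast; simp; ring
  · simp only [Nat.add_sub_cancel]
    push_cast
    linear_combination (-((m : ℝ)+1) * Real.sin x ^ m * (Real.cos x)⁻¹^(m+2)) * hcc

noncomputable abbrev ssec : Set ℝ := Set.Ioo (-(Real.pi/2)) (Real.pi/2)

lemma ssec_open : IsOpen ssec := isOpen_Ioo
lemma ssec_mem : (0:ℝ) ∈ ssec :=
  ⟨by linarith [Real.pi_div_two_pos], Real.pi_div_two_pos⟩
lemma ssec_ud : UniqueDiffOn ℝ ssec := ssec_open.uniqueDiffOn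
lemma ssec_cos {x : ℝ} (hx : x ∈ ssec) : Real.cos x ≠ 0 :=
  (Real.cos_pos_of_mem_Ioo hx).ne'

lemma gsec_contDiffOn (k : ℕ) : ContDiffOn ℝ (⊤ : ℕ∞) (gsec k) ssec := by
  unfold gsec
  apply ContDiffOn.mul
  · exact (Real.contDiff_cos.contDiffOn.inv (fun x hx => ssec_cos hx)).pow _
  · exact (Real.contDiff_sin.contDiffOn).pow _

lemma iteratedDerivWithin_gsec (n : ℕ) : ∀ k, iteratedDerivWithin n (gsec k) ssec 0 = aa n k := by
  induction n with
  | zero =>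
    intro k
    rw [iteratedDerivWithin_zero]
    unfold gsec
    rcases k with _ | m
    · simp [aa]
    · simp [aa]
  | succ n IH =>
    intro k
    rw [iteratedDerivWithin_succ']
    have heq : Set.EqOn (derivWithin (gsec k) ssec)
        (fun x => (k : ℝ) * gsec (k-1) x + ((k : ℝ)+2) * gsec (k+1) x) ssec := by
      intro x hx
      exact ((gsec_hasDerivAt k (ssec_cos hx)).hasDerivWithinAt).derivWithin
        (ssec_ud.uniqueDiffWithinAt hx)
    rw [iteratedDerivWithin_congr heq ssec_mem]
    have hm : ∀ m : ℕ, ContDiffOn ℝ (n : ℕ∞) (gsec m) ssec :=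
      fun m => (gsec_contDiffOn m).of_le (by exact_mod_cast le_top)
    have h1 : ContDiffOn ℝ (n : ℕ∞) (fun x => (k : ℝ) * gsec (k-1) x) ssec :=
      contDiffOn_const.mul (hm (k-1))
    have h2 : ContDiffOn ℝ (n : ℕ∞) (fun x => ((k : ℝ)+2) * gsec (k+1) x) ssec :=
      contDiffOn_const.mul (hm (k+1))
    rw [show (fun x => (k : ℝ) * gsec (k-1) x + ((k : ℝ)+2) * gsec (k+1) x)
        = (fun x => (k : ℝ) * gsec (k-1) x) + (fun x => ((k : ℝ)+2) * gsec (k+1) x) from rfl]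
    rw [iteratedDerivWithin_add ssec_mem ssec_ud (h1 0 ssec_mem) (h2 0 ssec_mem)]
    rw [iteratedDerivWithin_const_mul ssec_mem ssec_ud ((k : ℝ)) (hm (k-1) 0 ssec_mem),
        iteratedDerivWithin_const_mul ssec_mem ssec_ud ((k : ℝ)+2) (hm (k+1) 0 ssec_mem)]
    rw [IH (k-1), IH (k+1), aa_succ]

lemma iteratedDeriv_secsq (n : ℕ) :
    iteratedDeriv n (fun x : ℝ => (Real.cos x)⁻¹ ^ 2) 0 = aa n 0 := by
  have hfun : (fun x : ℝ => (Real.cos x)⁻¹ ^ 2) = gsec 0 := by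
    funext x; simp [gsec]
  rw [hfun, ← iteratedDerivWithin_gsec n 0]
  rw [iteratedDerivWithin, iteratedDeriv, iteratedFDerivWithin_of_isOpen n ssec_open ssec_mem]

lemma aa_zero_of_lt : ∀ n k, n < k → aa n k = 0 := by
  intro n
  induction n with
  | zero => intro k hk; match k, hk with | (m+1), _ => rfl
  | succ n IH =>
    intro k hk
    rw [aa_succ]
    rcases k with _ | m
    · omega
    · rw [IH (m+1-1) (by omega), IH (m+1+1) (by omega)]; ring

lemma aa_diag : ∀ n, aa n n = (n.factorial : ℝ) := by
  intro n
  induction n with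
  | zero => simp [aa]
  | succ n IH =>
    rw [aa_succ, aa_zero_of_lt n (n+1+1) (by omega)]
    simp only [Nat.add_sub_cancel]
    rw [IH]
    push_cast [Nat.factorial_succ]
    ring

lemma slide (i j : ℕ) :
    ∑ k ∈ Finset.range (i+2), ((k:ℝ)+1) * aa (i+1) k * aa j k
    = ∑ k ∈ Finset.range (i+1), ((k:ℝ)+1) * aa i k * aa (j+1) k := by
  have e1 : ∑ k ∈ Finset.range (i+2), ((k:ℝ)+1) * aa (i+1) k * aa j k
      = (∑ k ∈ Finset.range (i+2), ((k:ℝ)+1) * k * aa i (k-1) * aa j k)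
      + (∑ k ∈ Finset.range (i+2), ((k:ℝ)+1) * ((k:ℝ)+2) * aa i (k+1) * aa j k) := by
    rw [← Finset.sum_add_distrib]
    refine Finset.sum_congr rfl fun k _ => ?_
    rw [aa_succ]; ring
  have e2 : (∑ k ∈ Finset.range (i+2), ((k:ℝ)+1) * k * aa i (k-1) * aa j k)
      = ∑ k ∈ Finset.range (i+1), ((k:ℝ)+1) * ((k:ℝ)+2) * aa i k * aa j (k+1) := by
    rw [Finset.sum_range_succ']
    simp only [Nat.add_sub_cancel, Nat.cast_zero, Nat.cast_add, Nat.cast_one]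
    norm_num
    refine Finset.sum_congr rfl fun k _ => ?_
    ring
  have e3 : (∑ k ∈ Finset.range (i+2), ((k:ℝ)+1) * ((k:ℝ)+2) * aa i (k+1) * aa j k)
      = ∑ k ∈ Finset.range i, ((k:ℝ)+1) * ((k:ℝ)+2) * aa i (k+1) * aa j k := by
    rw [Finset.sum_range_succ, Finset.sum_range_succ,
        aa_zero_of_lt i (i+1+1) (by omega), aa_zero_of_lt i (i+1) (by omega)]
    ring
  have e4 : ∑ k ∈ Finset.range (i+1), ((k:ℝ)+1) * aa i k * aa (j+1) k
      = (∑ k ∈ Finset.range (i+1), ((k:ℝ)+1) * k * aa i k * aa j (k-1))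
      + (∑ k ∈ Finset.range (i+1), ((k:ℝ)+1) * ((k:ℝ)+2) * aa i k * aa j (k+1)) := by
    rw [← Finset.sum_add_distrib]
    refine Finset.sum_congr rfl fun k _ => ?_
    rw [aa_succ]; ring
  have e5 : (∑ k ∈ Finset.range (i+1), ((k:ℝ)+1) * k * aa i k * aa j (k-1))
      = ∑ k ∈ Finset.range i, ((k:ℝ)+1) * ((k:ℝ)+2) * aa i (k+1) * aa j k := by
    rw [Finset.sum_range_succ']
    simp only [Nat.add_sub_cancel, Nat.cast_zero, Nat.cast_add, Nat.cast_one]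
    norm_num
    refine Finset.sum_congr rfl fun k _ => ?_
    ring
  rw [e1, e2, e3, e4, e5]
  ring

lemma key : ∀ i j : ℕ, (∑ k ∈ Finset.range (i+1), ((k:ℝ)+1) * aa i k * aa j k) = aa (i+j) 0 := by
  intro i
  induction i with
  | zero =>
    intro j
    simp [aa]
  | succ i IH =>
    intro j
    rw [show i+1+1 = i+2 from rfl, slide i j, IH (j+1)]
    congr 1
    omega

lemma prod_add_two (n : ℕ) : ∏ k ∈ Finset.range n, (k+2) = (n+1).factorial := by
  induction n with
  | zero => simp
  | succ n IH => rw [Finset.prod_range_succ, IH, Nat.factorial_succ (n+1)]; ring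

lemma prod_add_one (n : ℕ) : ∏ k ∈ Finset.range n, (k+1) = n.factorial := by
  induction n with
  | zero => simp
  | succ n IH => rw [Finset.prod_range_succ, IH, Nat.factorial_succ n]; ring

lemma numid (n : ℕ) :
    (∏ k ∈ Finset.range (n+1), Nat.factorial k)^2 * Nat.factorial (n+1)
    = ∏ k ∈ Finset.range (n+1), ((k+1)*(k+2))^(n-k) := by
  induction n with
  | zero => simp
  | succ n IH =>
    rw [Finset.prod_range_succ (fun k => ((k+1)*(k+2))^(n+1-k)) (n+1)]
    have h1 : ∏ k ∈ Finset.range (n+1), ((k+1)*(k+2))^(n+1-k)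
        = (∏ k ∈ Finset.range (n+1), ((k+1)*(k+2))^(n-k))
          * ∏ k ∈ Finset.range (n+1), ((k+1)*(k+2)) := by
      rw [← Finset.prod_mul_distrib]
      refine Finset.prod_congr rfl fun k hk => ?_
      have : n+1-k = (n-k)+1 := by
        have := Finset.mem_range.mp hk; omega
      rw [this, pow_succ]
    rw [h1, ← IH, Finset.prod_mul_distrib, prod_add_one, prod_add_two]
    simp only [Nat.sub_self, pow_zero, mul_one]
    rw [Finset.prod_range_succ, Nat.factorial_succ (n+1)]
    ring

theorem hankel_transform_sec_sq (n : ℕ) :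
    Matrix.det (Matrix.of fun i j : Fin (n + 1) =>
        iteratedDeriv ((i : ℕ) + (j : ℕ)) (fun x : ℝ => (Real.cos x)⁻¹ ^ 2) 0)
      = ∏ k ∈ Finset.range (n + 1), (((k + 1) * (k + 2) : ℕ) : ℝ) ^ (n - k) := by
  set L : Matrix (Fin (n+1)) (Fin (n+1)) ℝ := Matrix.of fun i k => aa i k with hL
  set D : Matrix (Fin (n+1)) (Fin (n+1)) ℝ := Matrix.diagonal (fun k : Fin (n+1) => ((k:ℕ):ℝ)+1)
    with hD
  have hH : (Matrix.of fun i j : Fin (n + 1) =>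
      iteratedDeriv ((i : ℕ) + (j : ℕ)) (fun x : ℝ => (Real.cos x)⁻¹ ^ 2) 0)
      = L * D * Lᵀ := by
    ext i j
    rw [Matrix.of_apply, iteratedDeriv_secsq, Matrix.mul_apply]
    simp only [hL, hD, Matrix.mul_diagonal, Matrix.transpose_apply, Matrix.of_apply]
    rw [Fin.sum_univ_eq_sum_range (fun k => aa i k * (((k:ℕ):ℝ)+1) * aa j k) (n+1)]
    rw [← key i j]
    have hsub : Finset.range ((i:ℕ)+1) ⊆ Finset.range (n+1) :=
      Finset.range_subset_range.mpr (by have := i.isLt; omega)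
    rw [← Finset.sum_subset hsub (fun k _ hk => by
      rw [aa_zero_of_lt (i:ℕ) k (by simp [Finset.mem_range] at hk ⊢; omega)]; ring)]
    refine Finset.sum_congr rfl fun k _ => by ring
  rw [hH, Matrix.det_mul, Matrix.det_mul, Matrix.det_transpose, Matrix.det_diagonal]
  have hdetL : L.det = ∏ i : Fin (n+1), (((i:ℕ).factorial : ℕ) : ℝ) := by
    rw [Matrix.det_of_lowerTriangular L (fun i j hij => by
      rw [hL, Matrix.of_apply, aa_zero_of_lt (i:ℕ) (j:ℕ) (by exact_mod_cast hij)])]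
    exact Finset.prod_congr rfl fun i _ => by rw [hL, Matrix.of_apply, aa_diag]
  rw [hdetL]
  have hfin1 : ∏ i : Fin (n+1), (((i:ℕ).factorial : ℕ) : ℝ)
      = ((∏ k ∈ Finset.range (n+1), k.factorial : ℕ) : ℝ) := by
    rw [Nat.cast_prod]
    exact Fin.prod_univ_eq_prod_range (fun k => (k.factorial : ℝ)) (n+1)
  have hfin2 : ∏ k : Fin (n+1), (((k:ℕ):ℝ)+1) = (((n+1).factorial : ℕ) : ℝ) := by
    rw [← prod_add_one (n+1)]
    push_cast
    exact Fin.prod_univ_eq_prod_range (fun k => ((k:ℝ)+1)) (n+1)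
  have hrhs : ∏ k ∈ Finset.range (n+1), (((k + 1) * (k + 2) : ℕ) : ℝ) ^ (n - k)
      = ((∏ k ∈ Finset.range (n+1), ((k+1)*(k+2))^(n-k) : ℕ) : ℝ) := by
    push_cast; rfl
  rw [hfin1, hfin2, hrhs, ← numid n]
  push_cast
  ring
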